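/- arXiv:2306.17159 — 3 statements merged into one kernel-verified Lean document; each statement's English description precedes it below -/
import Mathlib

section
/- On four qubits (with qubits labelled p, q, r, s in tensor-product order), let A = (1/8)(X_r Y_s X_p X_q + Y_r X_s X_p X_q + Y_r Y_s Y_p X_q + Y_r Y_s X_p Y_q − X_r X_s Y_p X_q − X_r X_s X_p Y_q − Y_r X_s Y_p Y_q − X_r Y_s Y_p Y_q). Then A applied to any computational basis vector other than |1_p 1_q 0_r 0_s⟩ and |0_p 0_q 1_r 1_s⟩ equals the zero vector. -/
open Matrix

/-- The Pauli `X` matrix. -/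
noncomputable def PX : Matrix (Fin 2) (Fin 2) ℂ := !![0, 1; 1, 0]

/-- The Pauli `Y` matrix. -/
noncomputable def PY : Matrix (Fin 2) (Fin 2) ℂ := !![0, -Complex.I; Complex.I, 0]

/-- The Pauli `Z` matrix. -/
noncomputable def PZ : Matrix (Fin 2) (Fin 2) ℂ := !![1, 0; 0, -1]

/-- The operator on `N` qubits acting as the single-qubit operator `M` on qubit `k`
and as the identity on all other qubits (the `N`-qubit space, i.e. the `N`-fold tensor
product of `ℂ²`, is indexed by functions `Fin N → Fin 2`). -/
noncomputable def opN (N k : ℕ) (M : Matrix (Fin 2) (Fin 2) ℂ) :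
    Matrix (Fin N → Fin 2) (Fin N → Fin 2) ℂ :=
  Matrix.of fun v w =>
    ∏ j : Fin N, if (j : ℕ) = k then M (v j) (w j) else (if v j = w j then 1 else 0)

/-- The double-qubit excitation generator `A_{pqrs}` on four qubits
labelled `p = 0`, `q = 1`, `r = 2`, `s = 3` (in tensor-product order). -/
noncomputable def Aop : Matrix (Fin 4 → Fin 2) (Fin 4 → Fin 2) ℂ :=
  (1 / 8 : ℂ) •
    (opN 4 2 PX * opN 4 3 PY * opN 4 0 PX * opN 4 1 PX
      + opN 4 2 PY * opN 4 3 PX * opN 4 0 PX * opN 4 1 PX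
      + opN 4 2 PY * opN 4 3 PY * opN 4 0 PY * opN 4 1 PX
      + opN 4 2 PY * opN 4 3 PY * opN 4 0 PX * opN 4 1 PY
      - opN 4 2 PX * opN 4 3 PX * opN 4 0 PY * opN 4 1 PX
      - opN 4 2 PX * opN 4 3 PX * opN 4 0 PX * opN 4 1 PY
      - opN 4 2 PY * opN 4 3 PX * opN 4 0 PY * opN 4 1 PY
      - opN 4 2 PX * opN 4 3 PY * opN 4 0 PY * opN 4 1 PY)

/-- The computational basis vector of the four-qubit space labelled by `b`. -/
noncomputable def ket (b : Fin 4 → Fin 2) : (Fin 4 → Fin 2) → ℂ :=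
  fun v => if v = b then 1 else 0


lemma sum_pi4 (f : (Fin 4 → Fin 2) → ℂ) :
    ∑ u : Fin 4 → Fin 2, f u
      = ∑ x : Fin 2 × Fin 2 × Fin 2 × Fin 2, f ![x.1, x.2.1, x.2.2.1, x.2.2.2] :=
  (Fintype.sum_bijective
    (fun x : Fin 2 × Fin 2 × Fin 2 × Fin 2 => ![x.1, x.2.1, x.2.2.1, x.2.2.2])
    (by decide) _ _ (fun x => rfl)).symm

lemma quad (M0 M1 M2 M3 : Matrix (Fin 2) (Fin 2) ℂ) (v w : Fin 4 → Fin 2) :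
    (opN 4 2 M2 * opN 4 3 M3 * opN 4 0 M0 * opN 4 1 M1) v w
      = M0 (v 0) (w 0) * M1 (v 1) (w 1) * M2 (v 2) (w 2) * M3 (v 3) (w 3) := by
  simp [Matrix.mul_apply, opN, sum_pi4, Fin.prod_univ_four, Fintype.sum_prod_type,
    Fin.sum_univ_two, show ((0:Fin 4):ℕ)=0 from rfl, show ((1:Fin 4):ℕ)=1 from rfl,
    show ((2:Fin 4):ℕ)=2 from rfl, show ((3:Fin 4):ℕ)=3 from rfl]
  have e2 : ∀ i : Fin 2, i = 0 ∨ i = 1 := by decide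
  rcases e2 (v 0) with a0|a0 <;> rcases e2 (v 1) with a1|a1 <;> rcases e2 (v 3) with a3|a3 <;>
    rcases e2 (w 0) with c0|c0 <;> rcases e2 (w 2) with c2|c2 <;> rcases e2 (w 3) with c3|c3 <;>
    simp [a0, a1, a3, c0, c2, c3] <;> ring

set_option maxHeartbeats 2000000 in
/-- `A` annihilates every computational basis vector other than
`|1_p 1_q 0_r 0_s⟩` and `|0_p 0_q 1_r 1_s⟩`. -/
theorem Aop_mulVec_ket_eq_zero (b : Fin 4 → Fin 2)
    (h1 : b ≠ ![1, 1, 0, 0]) (h2 : b ≠ ![0, 0, 1, 1]) :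
    Aop.mulVec (ket b) = 0 := by
  have h1' : ¬(b 0 = 1 ∧ b 1 = 1 ∧ b 2 = 0 ∧ b 3 = 0) := by
    rintro ⟨a0, a1, a2, a3⟩
    exact h1 (by funext i; fin_cases i <;> simp [a0, a1, a2, a3])
  have h2' : ¬(b 0 = 0 ∧ b 1 = 0 ∧ b 2 = 1 ∧ b 3 = 1) := by
    rintro ⟨a0, a1, a2, a3⟩
    exact h2 (by funext i; fin_cases i <;> simp [a0, a1, a2, a3])
  funext v
  have key : Aop.mulVec (ket b) v = Aop v b := by
    simp [Matrix.mulVec, dotProduct, ket, mul_ite]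
  rw [Pi.zero_apply, key]
  have e2 : ∀ i : Fin 2, i = 0 ∨ i = 1 := by decide
  simp only [Aop, Matrix.smul_apply, Matrix.add_apply, Matrix.sub_apply, quad, smul_eq_mul]
  rcases e2 (b 0) with hb0|hb0 <;> rcases e2 (b 1) with hb1|hb1 <;>
    rcases e2 (b 2) with hb2|hb2 <;> rcases e2 (b 3) with hb3|hb3 <;>
  first
  | exact absurd (And.intro hb0 (And.intro hb1 (And.intro hb2 hb3))) h1'
  | exact absurd (And.intro hb0 (And.intro hb1 (And.intro hb2 hb3))) h2'
  | (rcases e2 (v 0) with hv0|hv0 <;> rcases e2 (v 1) with hv1|hv1 <;>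
      rcases e2 (v 2) with hv2|hv2 <;> rcases e2 (v 3) with hv3|hv3 <;>
      simp [hb0, hb1, hb2, hb3, hv0, hv1, hv2, hv3, PX, PY])
end

section
/- On four qubits (with qubits labelled p, q, r, s in tensor-product order), let A = (1/8)(X_r Y_s X_p X_q + Y_r X_s X_p X_q + Y_r Y_s Y_p X_q + Y_r Y_s X_p Y_q − X_r X_s Y_p X_q − X_r X_s X_p Y_q − Y_r X_s Y_p Y_q − X_r Y_s Y_p Y_q). Then A³ = A. -/
open Matrix

noncomputable def opV (Ms : Fin 4 → Matrix (Fin 2) (Fin 2) ℂ) :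
    Matrix (Fin 4 → Fin 2) (Fin 4 → Fin 2) ℂ :=
  Matrix.of fun v w => ∏ j : Fin 4, Ms j (v j) (w j)

lemma opN_eq_opV (k : ℕ) (M : Matrix (Fin 2) (Fin 2) ℂ) :
    opN 4 k M = opV (fun j => if (j : ℕ) = k then M else 1) := by
  ext v w
  simp only [opN, opV, of_apply]
  refine Finset.prod_congr rfl fun j _ => ?_
  split <;> simp [Matrix.one_apply]

lemma opV_mul (Ms Ns : Fin 4 → Matrix (Fin 2) (Fin 2) ℂ) :
    opV Ms * opV Ns = opV fun j => Ms j * Ns j := by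
  ext v w
  simp only [opV, Matrix.mul_apply, of_apply, ← Finset.prod_mul_distrib]
  rw [Fintype.prod_sum (f := fun j x => Ms j (v j) x * Ns j x (w j))]

lemma opV4 (A B C D : Matrix (Fin 2) (Fin 2) ℂ) :
    opN 4 2 A * opN 4 3 B * opN 4 0 C * opN 4 1 D = opV ![C, D, A, B] := by
  rw [opN_eq_opV, opN_eq_opV, opN_eq_opV, opN_eq_opV, opV_mul, opV_mul, opV_mul]
  refine congrArg opV (funext fun j => ?_)
  fin_cases j <;> simp


def va : Fin 4 → Fin 2 := ![0, 0, 1, 1]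
def vb : Fin 4 → Fin 2 := ![1, 1, 0, 0]

lemma eq_iff4 (u v : Fin 4 → Fin 2) :
    u = v ↔ u 0 = v 0 ∧ u 1 = v 1 ∧ u 2 = v 2 ∧ u 3 = v 3 := by
  constructor
  · rintro rfl; exact ⟨rfl, rfl, rfl, rfl⟩
  · rintro ⟨a, b, c, d⟩; funext j; fin_cases j <;> assumption

set_option maxHeartbeats 2000000 in
lemma Aop_eq : Aop = Matrix.single va vb Complex.I
    + Matrix.single vb va (-Complex.I) := by
  simp only [Aop, opV4]
  ext v w
  have hf : ∀ x : Fin 2, x = 0 ∨ x = 1 := by decide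
  rcases hf (v 0) with h0|h0 <;> rcases hf (v 1) with h1|h1 <;>
    rcases hf (v 2) with h2|h2 <;> rcases hf (v 3) with h3|h3 <;>
    rcases hf (w 0) with g0|g0 <;> rcases hf (w 1) with g1|g1 <;>
    rcases hf (w 2) with g2|g2 <;> rcases hf (w 3) with g3|g3 <;>
    simp only [opV, Matrix.single, of_apply, Matrix.smul_apply, Matrix.add_apply, Matrix.sub_apply,
      Fin.prod_univ_four, Matrix.cons_val_zero, Matrix.cons_val_one, Matrix.head_cons,
      Matrix.cons_val_two, Matrix.tail_cons, Matrix.cons_val_three, eq_iff4,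
      h0, h1, h2, h3, g0, g1, g2, g3, va, vb, PX, PY, smul_eq_mul] <;>
    norm_num <;> ring_nf

lemma hvab : va ≠ vb := by
  intro h
  have := congrFun h 0
  simp [va, vb] at this

/-- `A³ = A`. -/
theorem Aop_pow_three : Aop ^ 3 = Aop := by
  rw [Aop_eq]
  set x := Matrix.single va vb Complex.I with hx
  set y := Matrix.single vb va (-Complex.I) with hy
  have hxx : x * x = 0 := single_mul_single_of_ne _ _ _ _ hvab.symm _
  have hyy : y * y = 0 := single_mul_single_of_ne _ _ _ _ hvab _
  have hxy : x * y = Matrix.single va va 1 := by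
    rw [hx, hy, single_mul_single_same]
    norm_num [Complex.ext_iff]
  have hyx : y * x = Matrix.single vb vb 1 := by
    rw [hx, hy, single_mul_single_same]
    norm_num [Complex.ext_iff]
  have h2 : (x + y) * (x + y) = Matrix.single va va 1 + Matrix.single vb vb 1 := by
    rw [add_mul, mul_add, mul_add, hxx, hyy, hxy, hyx]
    abel
  have h3 : (Matrix.single va va 1 + Matrix.single vb vb 1) * (x + y) = x + y := by
    rw [add_mul, mul_add, mul_add, hx, hy, single_mul_single_same, single_mul_single_same,
      single_mul_single_of_ne _ _ _ _ hvab, single_mul_single_of_ne _ _ _ _ hvab.symm, one_mul, one_mul]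
    abel
  rw [pow_succ, pow_succ, pow_one, h2, h3]
end

section
/- Let N ≥ 3, let H = h·∑_{k=0}^{N−1} X_k + J·∑_{k=0}^{N−2} Z_k Z_{k+1} be the transverse-field Ising Hamiltonian on N qubits with h, J ∈ ℝ, let ψ be any vector in the N-qubit space, let θ ∈ ℝ, and let p be an index with 0 ≤ p < N−2. Then ⟨ψ, exp(iθ Z_p Y_{p+1}) H exp(−iθ Z_p Y_{p+1}) ψ⟩ = ⟨ψ, Hψ⟩ + sin(2θ)·⟨ψ, h(Z_p Z_{p+1} − Y_p Y_{p+1}) ψ⟩ − sin(2θ)·⟨ψ, J(X_{p+1} + Z_p X_{p+1} Z_{p+2}) ψ⟩ − 2 sin²(θ)·⟨ψ, (h X_p + h X_{p+1} + J Z_p Z_{p+1} + J Z_{p+1} Z_{p+2}) ψ⟩. -/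
open Matrix

/-- The transverse-field Ising Hamiltonian
`H = h ∑_{k=0}^{N−1} X_k + J ∑_{k=0}^{N−2} Z_k Z_{k+1}` on `N` qubits. -/
noncomputable def IsingH (N : ℕ) (h J : ℝ) :
    Matrix (Fin N → Fin 2) (Fin N → Fin 2) ℂ :=
  (h : ℂ) • ∑ k ∈ Finset.range N, opN N k PX
    + (J : ℂ) • ∑ k ∈ Finset.range (N - 1), opN N k PZ * opN N (k + 1) PZ

namespace LandAux

noncomputable def opF (N : ℕ) (f : Fin N → Matrix (Fin 2) (Fin 2) ℂ) :
    Matrix (Fin N → Fin 2) (Fin N → Fin 2) ℂ :=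
  Matrix.of fun v w => ∏ j, f j (v j) (w j)

lemma opN_eq_opF (N k : ℕ) (M : Matrix (Fin 2) (Fin 2) ℂ) :
    opN N k M = opF N (fun j => if (j : ℕ) = k then M else 1) := by
  ext v w
  simp only [opN, opF, Matrix.of_apply]
  refine Finset.prod_congr rfl fun j _ => ?_
  rcases eq_or_ne (j : ℕ) k with hj | hj <;> simp [hj, Matrix.one_apply]

lemma opF_mul {N : ℕ} (f g : Fin N → Matrix (Fin 2) (Fin 2) ℂ) :
    opF N f * opF N g = opF N (fun j => f j * g j) := by
  ext v w
  simp only [opF, Matrix.mul_apply, Matrix.of_apply]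
  have h1 : ∀ u : Fin N → Fin 2, (∏ j, f j (v j) (u j)) * ∏ j, g j (u j) (w j)
      = ∏ j, (f j (v j) (u j) * g j (u j) (w j)) := fun u => Finset.prod_mul_distrib.symm
  simp_rw [h1]
  rw [← Fintype.prod_sum (fun j x => f j (v j) x * g j x (w j))]

lemma opF_one {N : ℕ} : opF N (fun _ => (1 : Matrix (Fin 2) (Fin 2) ℂ)) = 1 := by
  ext v w
  simp only [opF, Matrix.of_apply, Matrix.one_apply]
  by_cases hvw : v = w
  · subst hvw; simp
  · rw [if_neg hvw]
    obtain ⟨j, hj⟩ := Function.ne_iff.mp hvw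
    exact Finset.prod_eq_zero (Finset.mem_univ j) (if_neg hj)

lemma opF_smul {N : ℕ} (f g : Fin N → Matrix (Fin 2) (Fin 2) ℂ) (c : Fin N → ℂ)
    (hfg : ∀ j, f j = c j • g j) :
    opF N f = (∏ j, c j) • opF N g := by
  ext v w
  simp only [opF, Matrix.of_apply, Matrix.smul_apply, smul_eq_mul]
  rw [← Finset.prod_mul_distrib]
  exact Finset.prod_congr rfl fun j _ => by rw [hfg j]; simp

lemma prod_if_single {N : ℕ} (k : ℕ) (hk : k < N) (c : ℂ) :
    (∏ j : Fin N, if (j : ℕ) = k then c else 1) = c := by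
  calc (∏ j : Fin N, if (j : ℕ) = k then c else 1)
      = ∏ j : Fin N, (if j = ⟨k, hk⟩ then c else 1) :=
        Finset.prod_congr rfl (fun j _ => by simp [Fin.ext_iff])
    _ = c := by simp

lemma PZZ : PZ * PZ = 1 := by
  ext i j; fin_cases i <;> fin_cases j <;>
    simp [PZ, Matrix.mul_apply, Fin.sum_univ_two, Matrix.one_apply]

lemma PYY : PY * PY = 1 := by
  ext i j; fin_cases i <;> fin_cases j <;>
    simp [PY, Matrix.mul_apply, Fin.sum_univ_two, Matrix.one_apply, Complex.I_mul_I]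

lemma PXZ : PX * PZ = (-Complex.I) • PY := by
  ext i j; fin_cases i <;> fin_cases j <;>
    simp [PX, PY, PZ, Matrix.mul_apply, Fin.sum_univ_two, Complex.I_mul_I]

lemma PZX : PZ * PX = Complex.I • PY := by
  ext i j; fin_cases i <;> fin_cases j <;>
    simp [PX, PY, PZ, Matrix.mul_apply, Fin.sum_univ_two, Complex.I_mul_I]

lemma PXY : PX * PY = Complex.I • PZ := by
  ext i j; fin_cases i <;> fin_cases j <;>
    simp [PX, PY, PZ, Matrix.mul_apply, Fin.sum_univ_two, Complex.I_mul_I]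

lemma PYX : PY * PX = (-Complex.I) • PZ := by
  ext i j; fin_cases i <;> fin_cases j <;>
    simp [PX, PY, PZ, Matrix.mul_apply, Fin.sum_univ_two, Complex.I_mul_I]

lemma PZY : PZ * PY = (-Complex.I) • PX := by
  ext i j; fin_cases i <;> fin_cases j <;>
    simp [PX, PY, PZ, Matrix.mul_apply, Fin.sum_univ_two, Complex.I_mul_I]

lemma PYZ : PY * PZ = Complex.I • PX := by
  ext i j; fin_cases i <;> fin_cases j <;>
    simp [PX, PY, PZ, Matrix.mul_apply, Fin.sum_univ_two, Complex.I_mul_I]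

section Products

variable {N p : ℕ} (hp2 : p + 2 < N)

include hp2

lemma hAA : (opN N p PZ * opN N (p + 1) PY) * (opN N p PZ * opN N (p + 1) PY) = 1 := by
  simp only [opN_eq_opF, opF_mul]
  rw [← @opF_one N]
  apply congrArg
  funext j
  split_ifs <;> first | (exfalso; omega) | simp [*, PZZ, PYY]

lemma q1 : opN N p PX * (opN N p PZ * opN N (p + 1) PY)
    = (-Complex.I) • (opN N (p) PY * opN N (p + 1) PY) := by
  simp only [opN_eq_opF, opF_mul]
  refine (opF_smul _ (fun j => (if (j : ℕ) = p then PY else 1) * (if (j : ℕ) = p + 1 then PY else 1)) (fun j => if (j : ℕ) = p then (-Complex.I) else 1) ?_).trans ?_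
  · intro j
    split_ifs <;> first | (exfalso; omega) | simp [*, PXZ]
  · rw [prod_if_single (p) (by omega)]

lemma q1' : (opN N p PZ * opN N (p + 1) PY) * opN N p PX
    = (Complex.I) • (opN N (p) PY * opN N (p + 1) PY) := by
  simp only [opN_eq_opF, opF_mul]
  refine (opF_smul _ (fun j => (if (j : ℕ) = p then PY else 1) * (if (j : ℕ) = p + 1 then PY else 1)) (fun j => if (j : ℕ) = p then (Complex.I) else 1) ?_).trans ?_
  · intro j
    split_ifs <;> first | (exfalso; omega) | simp [*, PZX]
  · rw [prod_if_single (p) (by omega)]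

lemma q2 : opN N (p + 1) PX * (opN N p PZ * opN N (p + 1) PY)
    = (Complex.I) • (opN N (p) PZ * opN N (p + 1) PZ) := by
  simp only [opN_eq_opF, opF_mul]
  refine (opF_smul _ (fun j => (if (j : ℕ) = p then PZ else 1) * (if (j : ℕ) = p + 1 then PZ else 1)) (fun j => if (j : ℕ) = p + 1 then (Complex.I) else 1) ?_).trans ?_
  · intro j
    split_ifs <;> first | (exfalso; omega) | simp [*, PXY]
  · rw [prod_if_single (p + 1) (by omega)]

lemma q2' : (opN N p PZ * opN N (p + 1) PY) * opN N (p + 1) PX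
    = (-Complex.I) • (opN N (p) PZ * opN N (p + 1) PZ) := by
  simp only [opN_eq_opF, opF_mul]
  refine (opF_smul _ (fun j => (if (j : ℕ) = p then PZ else 1) * (if (j : ℕ) = p + 1 then PZ else 1)) (fun j => if (j : ℕ) = p + 1 then (-Complex.I) else 1) ?_).trans ?_
  · intro j
    split_ifs <;> first | (exfalso; omega) | simp [*, PYX]
  · rw [prod_if_single (p + 1) (by omega)]

lemma q3 : (opN N p PZ * opN N (p + 1) PZ) * (opN N p PZ * opN N (p + 1) PY)
    = (-Complex.I) • (opN N (p + 1) PX) := by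
  simp only [opN_eq_opF, opF_mul]
  refine (opF_smul _ (fun j => (if (j : ℕ) = p + 1 then PX else 1)) (fun j => if (j : ℕ) = p + 1 then (-Complex.I) else 1) ?_).trans ?_
  · intro j
    split_ifs <;> first | (exfalso; omega) | simp [*, PZZ, PZY]
  · rw [prod_if_single (p + 1) (by omega)]

lemma q3' : (opN N p PZ * opN N (p + 1) PY) * (opN N p PZ * opN N (p + 1) PZ)
    = (Complex.I) • (opN N (p + 1) PX) := by
  simp only [opN_eq_opF, opF_mul]
  refine (opF_smul _ (fun j => (if (j : ℕ) = p + 1 then PX else 1)) (fun j => if (j : ℕ) = p + 1 then (Complex.I) else 1) ?_).trans ?_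
  · intro j
    split_ifs <;> first | (exfalso; omega) | simp [*, PZZ, PYZ]
  · rw [prod_if_single (p + 1) (by omega)]

lemma q4 : (opN N (p + 1) PZ * opN N (p + 2) PZ) * (opN N p PZ * opN N (p + 1) PY)
    = (-Complex.I) • (opN N (p) PZ * opN N (p + 1) PX * opN N (p + 2) PZ) := by
  simp only [opN_eq_opF, opF_mul]
  refine (opF_smul _ (fun j => (if (j : ℕ) = p then PZ else 1) * (if (j : ℕ) = p + 1 then PX else 1) * (if (j : ℕ) = p + 2 then PZ else 1)) (fun j => if (j : ℕ) = p + 1 then (-Complex.I) else 1) ?_).trans ?_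
  · intro j
    split_ifs <;> first | (exfalso; omega) | simp [*, PZY]
  · rw [prod_if_single (p + 1) (by omega)]

lemma q4' : (opN N p PZ * opN N (p + 1) PY) * (opN N (p + 1) PZ * opN N (p + 2) PZ)
    = (Complex.I) • (opN N (p) PZ * opN N (p + 1) PX * opN N (p + 2) PZ) := by
  simp only [opN_eq_opF, opF_mul]
  refine (opF_smul _ (fun j => (if (j : ℕ) = p then PZ else 1) * (if (j : ℕ) = p + 1 then PX else 1) * (if (j : ℕ) = p + 2 then PZ else 1)) (fun j => if (j : ℕ) = p + 1 then (Complex.I) else 1) ?_).trans ?_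
  · intro j
    split_ifs <;> first | (exfalso; omega) | simp [*, PYZ]
  · rw [prod_if_single (p + 1) (by omega)]

lemma q5 : (opN N p PY * opN N (p + 1) PY) * (opN N p PZ * opN N (p + 1) PY)
    = (Complex.I) • (opN N (p) PX) := by
  simp only [opN_eq_opF, opF_mul]
  refine (opF_smul _ (fun j => (if (j : ℕ) = p then PX else 1)) (fun j => if (j : ℕ) = p then (Complex.I) else 1) ?_).trans ?_
  · intro j
    split_ifs <;> first | (exfalso; omega) | simp [*, PYZ, PYY]
  · rw [prod_if_single (p) (by omega)]

lemma q6 : (opN N p PZ * opN N (p + 1) PX * opN N (p + 2) PZ) * (opN N p PZ * opN N (p + 1) PY)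
    = (Complex.I) • (opN N (p + 1) PZ * opN N (p + 2) PZ) := by
  simp only [opN_eq_opF, opF_mul]
  refine (opF_smul _ (fun j => (if (j : ℕ) = p + 1 then PZ else 1) * (if (j : ℕ) = p + 2 then PZ else 1)) (fun j => if (j : ℕ) = p + 1 then (Complex.I) else 1) ?_).trans ?_
  · intro j
    split_ifs <;> first | (exfalso; omega) | simp [*, PZZ, PXY]
  · rw [prod_if_single (p + 1) (by omega)]

lemma commX (k : ℕ) (h1 : k ≠ p) (h2 : k ≠ p + 1) :
    (opN N p PZ * opN N (p + 1) PY) * opN N k PX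
      = opN N k PX * (opN N p PZ * opN N (p + 1) PY) := by
  simp only [opN_eq_opF, opF_mul]
  apply congrArg
  funext j
  split_ifs <;> first | (exfalso; omega) | simp [*]

lemma commZZ (k : ℕ) (h1 : k ≠ p) (h2 : k ≠ p + 1) :
    (opN N p PZ * opN N (p + 1) PY) * (opN N k PZ * opN N (k + 1) PZ)
      = (opN N k PZ * opN N (k + 1) PZ) * (opN N p PZ * opN N (p + 1) PY) := by
  simp only [opN_eq_opF, opF_mul]
  apply congrArg
  funext j
  split_ifs <;> first | (exfalso; omega) | simp [*, mul_assoc]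

end Products


lemma exp_smul_of_sq_one {m : Type*} [Fintype m] [DecidableEq m]
    (A : Matrix m m ℂ) (hA : A * A = 1) (t : ℝ) :
    NormedSpace.exp ((Complex.I * (t : ℂ)) • A)
      = (Real.cos t : ℂ) • (1 : Matrix m m ℂ) + (Complex.I * (Real.sin t : ℂ)) • A := by
  have hA2 : A ^ 2 = 1 := by rw [sq, hA]
  have heven : ∀ n, A ^ (2 * n) = 1 := fun n => by rw [pow_mul, hA2, one_pow]
  have hodd : ∀ n, A ^ (2 * n + 1) = A := fun n => by rw [pow_succ, heven, one_mul]
  rw [NormedSpace.exp_eq_tsum (𝕂 := ℂ)]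
  refine HasSum.tsum_eq ?_
  refine HasSum.even_add_odd ?_ ?_
  · have h1 := (Complex.hasSum_cos (t : ℂ)).smul_const (1 : Matrix m m ℂ)
    rw [← Complex.ofReal_cos] at h1
    convert h1 using 2 with n
    · rfl
    rw [smul_pow, heven, smul_smul]
    congr 1
    rw [mul_pow, pow_mul, Complex.I_sq]
    field_simp
  · have h2 := ((Complex.hasSum_sin (t : ℂ)).smul_const A).const_smul Complex.I
    rw [← Complex.ofReal_sin] at h2
    have key : ∀ n : ℕ, (Nat.factorial (2 * n + 1) : ℂ)⁻¹ • ((Complex.I * (t : ℂ)) • A) ^ (2 * n + 1)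
        = Complex.I • ((((-1) ^ n * (t : ℂ) ^ (2 * n + 1) / (Nat.factorial (2 * n + 1) : ℂ))) • A) := by
      intro n
      rw [smul_pow, hodd, smul_smul, smul_smul]
      congr 1
      rw [mul_pow, pow_succ, pow_mul, Complex.I_sq]
      have : (Nat.factorial (2 * n + 1) : ℂ) ≠ 0 := Nat.cast_ne_zero.mpr (Nat.factorial_ne_zero _)
      field_simp
    rw [smul_smul] at h2
    simp_rw [key]
    exact h2

end LandAux

open LandAux in
/-- the GGA-VQE landscape function for the generator `Z_p Y_{p+1}` and the
transverse-field Ising Hamiltonian, for an index `0 ≤ p < N − 2`. -/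
theorem landscape_ZY_IsingH (N : ℕ) (hN : 3 ≤ N) (h J : ℝ)
    (ψ : (Fin N → Fin 2) → ℂ) (θ : ℝ) (p : ℕ) (hp : p < N - 2) :
    star ψ ⬝ᵥ ((NormedSpace.exp ((Complex.I * (θ : ℂ)) • (opN N p PZ * opN N (p + 1) PY)) *
        IsingH N h J *
        NormedSpace.exp ((-(Complex.I * (θ : ℂ))) •
          (opN N p PZ * opN N (p + 1) PY))).mulVec ψ)
      = star ψ ⬝ᵥ ((IsingH N h J).mulVec ψ)
        + (Real.sin (2 * θ) : ℂ) *
            (star ψ ⬝ᵥ (((h : ℂ) • (opN N p PZ * opN N (p + 1) PZ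
                - opN N p PY * opN N (p + 1) PY)).mulVec ψ))
        - (Real.sin (2 * θ) : ℂ) *
            (star ψ ⬝ᵥ (((J : ℂ) • (opN N (p + 1) PX
                + opN N p PZ * opN N (p + 1) PX * opN N (p + 2) PZ)).mulVec ψ))
        - 2 * (Real.sin θ : ℂ) ^ 2 *
            (star ψ ⬝ᵥ (((h : ℂ) • opN N p PX + (h : ℂ) • opN N (p + 1) PX
                + (J : ℂ) • (opN N p PZ * opN N (p + 1) PZ)
                + (J : ℂ) • (opN N (p + 1) PZ * opN N (p + 2) PZ)).mulVec ψ)) := by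
  have hp2 : p + 2 < N := by omega
  -- notation
  set A : Matrix (Fin N → Fin 2) (Fin N → Fin 2) ℂ := opN N p PZ * opN N (p + 1) PY with hAdef
  set H' : Matrix (Fin N → Fin 2) (Fin N → Fin 2) ℂ := IsingH N h J with hHdef
  set M1 : Matrix (Fin N → Fin 2) (Fin N → Fin 2) ℂ :=
    (h : ℂ) • (opN N p PZ * opN N (p + 1) PZ - opN N p PY * opN N (p + 1) PY) with hM1def
  set M2 : Matrix (Fin N → Fin 2) (Fin N → Fin 2) ℂ :=
    (J : ℂ) • (opN N (p + 1) PX + opN N p PZ * opN N (p + 1) PX * opN N (p + 2) PZ) with hM2def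
  set M3 : Matrix (Fin N → Fin 2) (Fin N → Fin 2) ℂ :=
    (h : ℂ) • opN N p PX + (h : ℂ) • opN N (p + 1) PX
      + (J : ℂ) • (opN N p PZ * opN N (p + 1) PZ)
      + (J : ℂ) • (opN N (p + 1) PZ * opN N (p + 2) PZ) with hM3def
  have hAA' : A * A = 1 := hAA hp2
  -- sum lemmas
  have hSX : ∑ k ∈ Finset.range N, (A * opN N k PX - opN N k PX * A)
      = (A * opN N p PX - opN N p PX * A)
        + (A * opN N (p + 1) PX - opN N (p + 1) PX * A) := by
    have step : ∀ k ∈ Finset.range N, (A * opN N k PX - opN N k PX * A)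
        = (if k = p then (A * opN N p PX - opN N p PX * A) else 0)
          + (if k = p + 1 then (A * opN N (p + 1) PX - opN N (p + 1) PX * A) else 0) := by
      intro k _
      rcases eq_or_ne k p with rfl | h1
      · rw [if_pos rfl, if_neg (by omega), add_zero]
      rcases eq_or_ne k (p + 1) with rfl | h2
      · rw [if_neg h1, if_pos rfl, zero_add]
      · rw [if_neg h1, if_neg h2, commX hp2 k h1 h2, sub_self, add_zero]
    rw [Finset.sum_congr rfl step, Finset.sum_add_distrib,
      Finset.sum_ite_eq' (Finset.range N) p, Finset.sum_ite_eq' (Finset.range N) (p + 1),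
      if_pos (Finset.mem_range.mpr (by omega)), if_pos (Finset.mem_range.mpr (by omega))]
  have hSZ : ∑ k ∈ Finset.range (N - 1),
        (A * (opN N k PZ * opN N (k + 1) PZ) - (opN N k PZ * opN N (k + 1) PZ) * A)
      = (A * (opN N p PZ * opN N (p + 1) PZ) - (opN N p PZ * opN N (p + 1) PZ) * A)
        + (A * (opN N (p + 1) PZ * opN N (p + 2) PZ)
            - (opN N (p + 1) PZ * opN N (p + 2) PZ) * A) := by
    have step : ∀ k ∈ Finset.range (N - 1),
        (A * (opN N k PZ * opN N (k + 1) PZ) - (opN N k PZ * opN N (k + 1) PZ) * A)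
        = (if k = p then (A * (opN N p PZ * opN N (p + 1) PZ)
              - (opN N p PZ * opN N (p + 1) PZ) * A) else 0)
          + (if k = p + 1 then (A * (opN N (p + 1) PZ * opN N (p + 2) PZ)
              - (opN N (p + 1) PZ * opN N (p + 2) PZ) * A) else 0) := by
      intro k _
      rcases eq_or_ne k p with rfl | h1
      · rw [if_pos rfl, if_neg (by omega), add_zero]
      rcases eq_or_ne k (p + 1) with rfl | h2
      · rw [if_neg h1, if_pos rfl, zero_add]
      · rw [if_neg h1, if_neg h2, commZZ hp2 k h1 h2, sub_self, add_zero]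
    rw [Finset.sum_congr rfl step, Finset.sum_add_distrib,
      Finset.sum_ite_eq' (Finset.range (N - 1)) p,
      Finset.sum_ite_eq' (Finset.range (N - 1)) (p + 1),
      if_pos (Finset.mem_range.mpr (by omega)), if_pos (Finset.mem_range.mpr (by omega))]
  have e1 : A * H' - H' * A
      = (h : ℂ) • (∑ k ∈ Finset.range N, (A * opN N k PX - opN N k PX * A))
        + (J : ℂ) • (∑ k ∈ Finset.range (N - 1),
            (A * (opN N k PZ * opN N (k + 1) PZ) - (opN N k PZ * opN N (k + 1) PZ) * A)) := by
    rw [hHdef]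
    simp only [IsingH, mul_add, add_mul, Finset.mul_sum, Finset.sum_mul, mul_smul_comm,
      smul_mul_assoc, Finset.sum_sub_distrib, smul_sub]
    abel
  have hΔ : A * H' - H' * A = ((-2) * Complex.I) • (M1 - M2) := by
    rw [e1, hSX, hSZ, q1 hp2, q1' hp2, q2 hp2, q2' hp2, q3 hp2, q3' hp2, q4 hp2, q4' hp2,
      hM1def, hM2def]
    module
  have hAH : A * H' = H' * A + ((-2) * Complex.I) • (M1 - M2) := by
    rw [← hΔ]; abel
  have hM12A : (M1 - M2) * A = (-Complex.I) • M3 := by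
    rw [hM1def, hM2def, hM3def]
    simp only [sub_mul, add_mul, smul_mul_assoc]
    rw [q3 hp2, q5 hp2, q2 hp2, q6 hp2]
    module
  clear_value A H' M1 M2 M3
  have hAHA : A * H' * A = H' - (2 : ℂ) • M3 := by
    calc A * H' * A = (H' * A + ((-2) * Complex.I) • (M1 - M2)) * A := by rw [hAH]
      _ = H' * (A * A) + ((-2) * Complex.I) • ((M1 - M2) * A) := by
          simp only [add_mul, smul_mul_assoc, mul_assoc]
      _ = H' - (2 : ℂ) • M3 := by
          rw [hAA', hM12A, mul_one, smul_smul]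
          have e3 : (-2) * Complex.I * (-Complex.I) = -2 := by
            linear_combination 2 * Complex.I_mul_I
          rw [e3]
          module
  -- exponentials
  have hexp1 : NormedSpace.exp ((Complex.I * (θ : ℂ)) • A)
      = (Real.cos θ : ℂ) • (1 : Matrix (Fin N → Fin 2) (Fin N → Fin 2) ℂ)
        + (Complex.I * (Real.sin θ : ℂ)) • A := exp_smul_of_sq_one A hAA' θ
  have hexp2 : NormedSpace.exp ((-(Complex.I * (θ : ℂ))) • A)
      = (Real.cos θ : ℂ) • (1 : Matrix (Fin N → Fin 2) (Fin N → Fin 2) ℂ)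
        - (Complex.I * (Real.sin θ : ℂ)) • A := by
    have h1 : (-(Complex.I * (θ : ℂ))) • A = (Complex.I * ((-θ : ℝ) : ℂ)) • A := by
      congr 1
      push_cast
      ring
    rw [h1, exp_smul_of_sq_one A hAA' (-θ)]
    push_cast [Real.cos_neg, Real.sin_neg]
    module
  have hcs : (Real.cos θ : ℂ) * (Real.cos θ : ℂ) + (Real.sin θ : ℂ) * (Real.sin θ : ℂ) = 1 := by
    rw [Complex.ofReal_cos, Complex.ofReal_sin]
    linear_combination Complex.sin_sq_add_cos_sq (θ : ℂ)
  have hs2 : (Real.sin (2 * θ) : ℂ) = 2 * (Real.sin θ : ℂ) * (Real.cos θ : ℂ) := by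
    rw [Complex.ofReal_sin, Complex.ofReal_sin, Complex.ofReal_cos]
    push_cast
    linear_combination Complex.sin_two_mul (θ : ℂ)
  have hmat : NormedSpace.exp ((Complex.I * (θ : ℂ)) • A) * H' *
        NormedSpace.exp ((-(Complex.I * (θ : ℂ))) • A)
      = H' + (Real.sin (2 * θ) : ℂ) • M1 - (Real.sin (2 * θ) : ℂ) • M2
        - (2 * (Real.sin θ : ℂ) ^ 2) • M3 := by
    rw [hexp1, hexp2]
    set c : ℂ := (Real.cos θ : ℂ)
    set s : ℂ := (Real.sin θ : ℂ)
    have expand : (c • (1 : Matrix (Fin N → Fin 2) (Fin N → Fin 2) ℂ)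
          + (Complex.I * s) • A) * H' * (c • 1 - (Complex.I * s) • A)
        = (c * c) • H' + ((Complex.I * s) * c) • (A * H') - (c * (Complex.I * s)) • (H' * A)
          - ((Complex.I * s) * (Complex.I * s)) • (A * H' * A) := by
      simp only [mul_add, add_mul, mul_sub, sub_mul, smul_mul_assoc, mul_smul_comm,
        one_mul, mul_one, smul_smul]
      module
    rw [expand, hAHA, hAH, hs2]
    match_scalars
    all_goals first
      | ring1
      | linear_combination hcs + (-(s * s)) * Complex.I_mul_I
      | linear_combination (-2 * s * c) * Complex.I_mul_I
      | linear_combination (2 * s * c) * Complex.I_mul_I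
      | linear_combination (2 * s * s) * Complex.I_mul_I
      | linear_combination (-2 * s * s) * Complex.I_mul_I
  rw [hmat]
  simp only [Matrix.add_mulVec, Matrix.sub_mulVec, Matrix.smul_mulVec,
    dotProduct_add, dotProduct_sub, dotProduct_smul, smul_eq_mul]
end
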